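/- Let 𝒫 be a converting vector set from ρ to σ, let {μ_i}_{i∈[q]} and {ν_i}_{i∈[q]} be unit vectors in ℂ^q satisfying ⟨μ_i|ν_j⟩ = (q/(2(q−1)))·(1 − δ_{ij}) for all i, j ∈ [q], let x ∈ X, and let α, ε̂ > 0. Define |φ_x⟩ := |t_{x+}⟩ + (√ε̂·(q−1)/(√α·q))·Σ_{j∈[n]} |j⟩|ν_{x_j}⟩|v_{xj}⟩. Then: (i) ⟨ψ_{y,α,ε̂}|φ_x⟩ = 0 for every y ∈ X, hence Λ^{α,ε̂}|φ_x⟩ = |φ_x⟩; (ii) Π_x|φ_x⟩ = |φ_x⟩; consequently U(𝒫, x, α, ε̂)|φ_x⟩ = |φ_x⟩; and (iii) ‖|φ_x⟩‖² = 1 + (ε̂(q−1)²/(α q²))·w_−(𝒫, x). -/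

import Mathlib

noncomputable section

open Finset

variable {q n m : ℕ} {𝓗 : Type*} [NormedAddCommGroup 𝓗] [InnerProductSpace ℂ 𝓗]

/-- `(u, v)` is a converting vector set from `ρ` to `σ` (relative to `X`):
for all `x, y ∈ X`, `⟨ρ_x|ρ_y⟩ − ⟨σ_x|σ_y⟩ = Σ_{j : x_j ≠ y_j} ⟨u_{xj}|v_{yj}⟩`. -/
def IsCVS (X : Finset (Fin n → Fin q)) (ρ σ : (Fin n → Fin q) → 𝓗)
    (u v : (Fin n → Fin q) → Fin n → EuclideanSpace ℂ (Fin m)) : Prop :=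
  ∀ x ∈ X, ∀ y ∈ X,
    (inner ℂ (ρ x) (ρ y) : ℂ) - (inner ℂ (σ x) (σ y) : ℂ) =
      ∑ j ∈ Finset.univ.filter (fun j => x j ≠ y j), (inner ℂ (u x j) (v y j) : ℂ)

/-- witness size of a family of vectors: `Σ_j ‖u_{xj}‖²`. -/
def wSize (u : (Fin n → Fin q) → Fin n → EuclideanSpace ℂ (Fin m))
    (x : Fin n → Fin q) : ℝ :=
  ∑ j : Fin n, ‖u x j‖ ^ 2

/-- The space `(ℂ²⊗𝒣) ⊕ (ℂⁿ⊗ℂ^q⊗ℂ^m)`, realized as the `L²` direct sum of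
`𝒣 ⊕ 𝒣` (the two components of `ℂ²⊗𝒣`) and `n` copies of `ℂ^{q×m}`. -/
abbrev BigSpace (𝓗 : Type*) [NormedAddCommGroup 𝓗] [InnerProductSpace ℂ 𝓗]
    (q n m : ℕ) : Type _ :=
  WithLp 2 ((PiLp 2 fun _ : Fin 2 => 𝓗) ×
    (PiLp 2 fun _ : Fin n => EuclideanSpace ℂ (Fin q × Fin m)))

/-- build an element of `BigSpace` from its two components. -/
def mkBig (a : PiLp 2 fun _ : Fin 2 => 𝓗)
    (g : PiLp 2 fun _ : Fin n => EuclideanSpace ℂ (Fin q × Fin m)) :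
    BigSpace 𝓗 q n m :=
  (WithLp.equiv 2 _).symm (a, g)

/-- `|0⟩a + |1⟩b ∈ ℂ²⊗𝒣`. -/
def mk2 (a b : 𝓗) : PiLp 2 fun _ : Fin 2 => 𝓗 :=
  (WithLp.equiv 2 _).symm (fun i => if i = 0 then a else b)

/-- build an element of `ℂⁿ⊗ℂ^q⊗ℂ^m` from its components. -/
def mkPi (g : Fin n → EuclideanSpace ℂ (Fin q × Fin m)) :
    PiLp 2 fun _ : Fin n => EuclideanSpace ℂ (Fin q × Fin m) :=
  (WithLp.equiv 2 _).symm g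

/-- the pure tensor `ν ⊗ w ∈ ℂ^q ⊗ ℂ^m`. -/
def tens (ν : EuclideanSpace ℂ (Fin q)) (w : EuclideanSpace ℂ (Fin m)) :
    EuclideanSpace ℂ (Fin q × Fin m) :=
  (WithLp.equiv 2 _).symm fun p => ν p.1 * w p.2

/-- `|t_{x+}⟩ = (1/√2)(|0⟩|ρ_x⟩ + |1⟩|σ_x⟩)`. -/
def tPlus (ρ σ : (Fin n → Fin q) → 𝓗) (x : Fin n → Fin q) :
    BigSpace 𝓗 q n m :=
  mkBig (mk2 ((((Real.sqrt 2 : ℝ) : ℂ))⁻¹ • ρ x) ((((Real.sqrt 2 : ℝ) : ℂ))⁻¹ • σ x)) 0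

/-- `|t_{x−}⟩ = (1/√2)(|0⟩|ρ_x⟩ − |1⟩|σ_x⟩)`. -/
def tMinus (ρ σ : (Fin n → Fin q) → 𝓗) (x : Fin n → Fin q) :
    BigSpace 𝓗 q n m :=
  mkBig (mk2 ((((Real.sqrt 2 : ℝ) : ℂ))⁻¹ • ρ x) (-((((Real.sqrt 2 : ℝ) : ℂ))⁻¹ • σ x))) 0

/-- `|ψ_{x,α,ε̂}⟩ = √(ε̂/α)|t_{x−}⟩ − Σ_j |j⟩|μ_{x_j}⟩|u_{xj}⟩`. -/
def psi (ρ σ : (Fin n → Fin q) → 𝓗)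
    (u : (Fin n → Fin q) → Fin n → EuclideanSpace ℂ (Fin m))
    (μ : Fin q → EuclideanSpace ℂ (Fin q)) (α εh : ℝ) (x : Fin n → Fin q) :
    BigSpace 𝓗 q n m :=
  (((Real.sqrt (εh / α) : ℝ) : ℂ)) • tMinus ρ σ x -
    mkBig 0 (mkPi fun j => tens (μ (x j)) (u x j))

/-- `⟨ν| ⊗ I : ℂ^q ⊗ ℂ^m → ℂ^m`, contraction of the first tensor factor with `ν`. -/
def contractL (ν : EuclideanSpace ℂ (Fin q)) :
    EuclideanSpace ℂ (Fin q × Fin m) →ₗ[ℂ] EuclideanSpace ℂ (Fin m) :=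
  (WithLp.linearEquiv 2 ℂ (Fin m → ℂ)).symm.toLinearMap ∘ₗ
    LinearMap.pi fun k => (innerSL ℂ (tens ν (EuclideanSpace.single k 1))).toLinearMap

/-- `|ν⟩ ⊗ I : ℂ^m → ℂ^q ⊗ ℂ^m`, tensoring with `ν`. -/
def tensL (ν : EuclideanSpace ℂ (Fin q)) :
    EuclideanSpace ℂ (Fin m) →ₗ[ℂ] EuclideanSpace ℂ (Fin q × Fin m) :=
  (WithLp.linearEquiv 2 ℂ (Fin q × Fin m → ℂ)).symm.toLinearMap ∘ₗ
    LinearMap.pi fun p : Fin q × Fin m =>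
      ν p.1 • (LinearMap.proj p.2 ∘ₗ (WithLp.linearEquiv 2 ℂ (Fin m → ℂ)).toLinearMap)

/-- `|ν⟩⟨ν| ⊗ I` on `ℂ^q ⊗ ℂ^m`. -/
def projMu (ν : EuclideanSpace ℂ (Fin q)) :
    EuclideanSpace ℂ (Fin q × Fin m) →ₗ[ℂ] EuclideanSpace ℂ (Fin q × Fin m) :=
  tensL ν ∘ₗ contractL ν

/-- `Σ_j |j⟩⟨j| ⊗ |μ_{x_j}⟩⟨μ_{x_j}| ⊗ I` on `ℂⁿ⊗ℂ^q⊗ℂ^m`. -/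
def sumProjMu (μ : Fin q → EuclideanSpace ℂ (Fin q)) (x : Fin n → Fin q) :
    (PiLp 2 fun _ : Fin n => EuclideanSpace ℂ (Fin q × Fin m)) →ₗ[ℂ]
      (PiLp 2 fun _ : Fin n => EuclideanSpace ℂ (Fin q × Fin m)) :=
  (WithLp.linearEquiv 2 ℂ (∀ _ : Fin n, EuclideanSpace ℂ (Fin q × Fin m))).symm.toLinearMap ∘ₗ
    (LinearMap.pi fun j => projMu (μ (x j)) ∘ₗ LinearMap.proj j) ∘ₗ
    (WithLp.linearEquiv 2 ℂ (∀ _ : Fin n, EuclideanSpace ℂ (Fin q × Fin m))).toLinearMap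

/-- the canonical linear identification of `BigSpace` with the product. -/
def bigEquiv (𝓗 : Type*) [NormedAddCommGroup 𝓗] [InnerProductSpace ℂ 𝓗] (q n m : ℕ) :
    BigSpace 𝓗 q n m ≃ₗ[ℂ]
      (PiLp 2 fun _ : Fin 2 => 𝓗) ×
        (PiLp 2 fun _ : Fin n => EuclideanSpace ℂ (Fin q × Fin m)) :=
  WithLp.linearEquiv 2 ℂ _

/-- `Π_x = I − Σ_j |j⟩⟨j| ⊗ |μ_{x_j}⟩⟨μ_{x_j}| ⊗ I` on `(ℂ²⊗𝒣) ⊕ (ℂⁿ⊗ℂ^q⊗ℂ^m)`. -/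
def PiX (μ : Fin q → EuclideanSpace ℂ (Fin q)) (x : Fin n → Fin q) :
    BigSpace 𝓗 q n m →ₗ[ℂ] BigSpace 𝓗 q n m :=
  LinearMap.id -
    (bigEquiv 𝓗 q n m).symm.toLinearMap ∘ₗ
      (LinearMap.prodMap 0 (sumProjMu μ x)) ∘ₗ (bigEquiv 𝓗 q n m).toLinearMap

/-- orthogonal projection onto a submodule, as an endomorphism. -/
def projL {K : Type*} [NormedAddCommGroup K] [InnerProductSpace ℂ K] [FiniteDimensional ℂ K]
    (S : Submodule ℂ K) : K →ₗ[ℂ] K :=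
  S.subtype ∘ₗ (S.orthogonalProjection).toLinearMap

/-- `Λ^{α,ε̂}`: the orthogonal projection onto the orthogonal complement of
`span{|ψ_{x,α,ε̂}⟩ : x ∈ X}`. -/
def LambdaCVS [FiniteDimensional ℂ 𝓗] (X : Finset (Fin n → Fin q))
    (ρ σ : (Fin n → Fin q) → 𝓗)
    (u : (Fin n → Fin q) → Fin n → EuclideanSpace ℂ (Fin m))
    (μ : Fin q → EuclideanSpace ℂ (Fin q)) (α εh : ℝ) :
    BigSpace 𝓗 q n m →ₗ[ℂ] BigSpace 𝓗 q n m :=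
  projL ((Submodule.span ℂ ((fun x => psi ρ σ u μ α εh x) '' (X : Set (Fin n → Fin q))))ᗮ)

/-- `U(𝒫, x, α, ε̂) = (2Π_x − I)(2Λ^{α,ε̂} − I)`. -/
def Ucvs [FiniteDimensional ℂ 𝓗] (X : Finset (Fin n → Fin q))
    (ρ σ : (Fin n → Fin q) → 𝓗)
    (u : (Fin n → Fin q) → Fin n → EuclideanSpace ℂ (Fin m))
    (μ : Fin q → EuclideanSpace ℂ (Fin q)) (α εh : ℝ) (x : Fin n → Fin q) :
    BigSpace 𝓗 q n m →ₗ[ℂ] BigSpace 𝓗 q n m :=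
  (2 • PiX μ x - LinearMap.id) ∘ₗ (2 • LambdaCVS X ρ σ u μ α εh - LinearMap.id)

/-- `phaseSpace U Θ` is the span of the eigenvectors of `U` with eigenvalue `e^{iθ}`
for `|θ| ≤ Θ`; the orthogonal projection onto it is `P_Θ(U)`. -/
def phaseSpace {K : Type*} [NormedAddCommGroup K] [InnerProductSpace ℂ K]
    (U : K →ₗ[ℂ] K) (Θ : ℝ) : Submodule ℂ K :=
  ⨆ θ : Set.Icc (-Θ) Θ, Module.End.eigenspace U (Complex.exp (Complex.I * (θ : ℝ)))


section Aux
variable {q n m : ℕ} {𝓗 : Type*} [NormedAddCommGroup 𝓗] [InnerProductSpace ℂ 𝓗]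

lemma inner_tens (a c : EuclideanSpace ℂ (Fin q)) (b d : EuclideanSpace ℂ (Fin m)) :
    (inner ℂ (tens a b) (tens c d) : ℂ) = (inner ℂ a c : ℂ) * (inner ℂ b d : ℂ) := by
  simp only [tens, PiLp.inner_apply, RCLike.inner_apply, WithLp.equiv_symm_apply, PiLp.toLp_apply, map_mul]
  rw [Fintype.sum_prod_type, Finset.sum_mul_sum]
  exact Finset.sum_congr rfl fun i _ => Finset.sum_congr rfl fun k _ => by ring

lemma inner_mkBig (a a' : PiLp 2 fun _ : Fin 2 => 𝓗)
    (g g' : PiLp 2 fun _ : Fin n => EuclideanSpace ℂ (Fin q × Fin m)) :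
    (inner ℂ (mkBig a g) (mkBig a' g') : ℂ) = (inner ℂ a a' : ℂ) + (inner ℂ g g' : ℂ) := by
  rfl

lemma inner_mk2 (a b a' b' : 𝓗) :
    (inner ℂ (mk2 a b) (mk2 a' b') : ℂ) = (inner ℂ a a' : ℂ) + (inner ℂ b b' : ℂ) := by
  simp [mk2, PiLp.inner_apply, Fin.sum_univ_two, WithLp.equiv_symm_apply]

lemma inner_mkPi (g g' : Fin n → EuclideanSpace ℂ (Fin q × Fin m)) :
    (inner ℂ (mkPi g) (mkPi g') : ℂ) = ∑ j : Fin n, (inner ℂ (g j) (g' j) : ℂ) := by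
  rfl

lemma contractL_tens (μ' ν' : EuclideanSpace ℂ (Fin q)) (w : EuclideanSpace ℂ (Fin m)) :
    contractL (m := m) μ' (tens ν' w) = (inner ℂ μ' ν' : ℂ) • w := by
  ext k
  simp only [contractL, LinearMap.comp_apply, LinearEquiv.coe_coe, LinearMap.pi_apply,
    ContinuousLinearMap.coe_coe, innerSL_apply_apply, WithLp.coe_symm_linearEquiv,
    PiLp.toLp_apply, PiLp.smul_apply, smul_eq_mul]
  rw [inner_tens]
  congr 1
  simp [EuclideanSpace.inner_single_left]

lemma projMu_tens_zero (μ' ν' : EuclideanSpace ℂ (Fin q)) (w : EuclideanSpace ℂ (Fin m))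
    (h : (inner ℂ μ' ν' : ℂ) = 0) : projMu (m := m) μ' (tens ν' w) = 0 := by
  rw [projMu, LinearMap.comp_apply, contractL_tens, h, zero_smul, map_zero]

lemma sumProjMu_mkPi (μ : Fin q → EuclideanSpace ℂ (Fin q)) (x : Fin n → Fin q)
    (g : Fin n → EuclideanSpace ℂ (Fin q × Fin m)) :
    sumProjMu μ x (mkPi g) = mkPi (fun j => projMu (μ (x j)) (g j)) := rfl

lemma PiX_fixed (μ : Fin q → EuclideanSpace ℂ (Fin q)) (x : Fin n → Fin q)
    (φ : BigSpace 𝓗 q n m)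
    (h : sumProjMu (m := m) μ x ((bigEquiv 𝓗 q n m φ).2) = 0) : PiX μ x φ = φ := by
  simp only [PiX, LinearMap.sub_apply, LinearMap.id_apply, LinearMap.comp_apply,
    LinearEquiv.coe_coe, LinearMap.prodMap_apply, LinearMap.zero_apply, h]
  have : ((0 : PiLp 2 fun _ : Fin 2 => 𝓗),
      (0 : PiLp 2 fun _ : Fin n => EuclideanSpace ℂ (Fin q × Fin m))) =
      (0 : (PiLp 2 fun _ : Fin 2 => 𝓗) ×
        (PiLp 2 fun _ : Fin n => EuclideanSpace ℂ (Fin q × Fin m))) := rfl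
  rw [this, map_zero, sub_zero]

lemma mem_span_orthogonal' {K : Type*} [NormedAddCommGroup K] [InnerProductSpace ℂ K]
    (T : Set K) (φ : K) (h : ∀ ψ ∈ T, (inner ℂ ψ φ : ℂ) = 0) :
    φ ∈ (Submodule.span ℂ T)ᗮ := by
  rw [Submodule.mem_orthogonal]
  intro ψ hψ
  refine Submodule.span_induction (fun a ha => h a ha) (inner_zero_left φ)
    (fun a b _ _ ha hb => by rw [inner_add_left, ha, hb, add_zero])
    (fun c a _ ha => by rw [inner_smul_left, ha, mul_zero]) hψ

lemma inner_mkBig_zero₁ (a : PiLp 2 fun _ : Fin 2 => 𝓗)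
    (g : PiLp 2 fun _ : Fin n => EuclideanSpace ℂ (Fin q × Fin m)) :
    (inner ℂ (mkBig a 0) (mkBig 0 g) : ℂ) = 0 := by
  rw [inner_mkBig, inner_zero_right, inner_zero_left, add_zero]

lemma inner_mkBig_zero₂ (g : PiLp 2 fun _ : Fin n => EuclideanSpace ℂ (Fin q × Fin m))
    (a : PiLp 2 fun _ : Fin 2 => 𝓗) :
    (inner ℂ (mkBig 0 g) (mkBig a 0) : ℂ) = 0 := by
  rw [inner_mkBig, inner_zero_left, inner_zero_right, add_zero]

lemma inner_mkBig00 (g g' : Fin n → EuclideanSpace ℂ (Fin q × Fin m)) :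
    (inner ℂ (mkBig (𝓗 := 𝓗) 0 (mkPi g)) (mkBig 0 (mkPi g')) : ℂ) =
      ∑ j : Fin n, (inner ℂ (g j) (g' j) : ℂ) := by
  rw [inner_mkBig, inner_zero_left, zero_add, inner_mkPi]

lemma sqrt2_inv_sq : ((((Real.sqrt 2 : ℝ) : ℂ))⁻¹) * ((((Real.sqrt 2 : ℝ) : ℂ))⁻¹) = (2 : ℂ)⁻¹ := by
  rw [← mul_inv, ← Complex.ofReal_mul, Real.mul_self_sqrt (by norm_num)]
  norm_num

lemma inner_tMinus_tPlus (ρ σ : (Fin n → Fin q) → 𝓗) (x y : Fin n → Fin q) :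
    (inner ℂ (tMinus (m := m) ρ σ y) (tPlus ρ σ x) : ℂ) =
      (2 : ℂ)⁻¹ * ((inner ℂ (ρ y) (ρ x) : ℂ) - (inner ℂ (σ y) (σ x) : ℂ)) := by
  rw [tMinus, tPlus, inner_mkBig, inner_mk2, inner_zero_left, add_zero,
    inner_neg_left, inner_smul_left, inner_smul_left, inner_smul_right, inner_smul_right]
  simp only [map_inv₀, Complex.conj_ofReal]
  rw [← mul_assoc, ← mul_assoc, sqrt2_inv_sq]
  ring

lemma inner_tPlus_tPlus (ρ σ : (Fin n → Fin q) → 𝓗) (x y : Fin n → Fin q) :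
    (inner ℂ (tPlus (m := m) ρ σ y) (tPlus ρ σ x) : ℂ) =
      (2 : ℂ)⁻¹ * ((inner ℂ (ρ y) (ρ x) : ℂ) + (inner ℂ (σ y) (σ x) : ℂ)) := by
  rw [tPlus, tPlus, inner_mkBig, inner_mk2, inner_zero_left, add_zero,
    inner_smul_left, inner_smul_left, inner_smul_right, inner_smul_right]
  simp only [map_inv₀, Complex.conj_ofReal]
  rw [← mul_assoc, ← mul_assoc, sqrt2_inv_sq]
  ring

end Aux

/-- `|φ_x⟩ = |t_{x+}⟩ + (√ε̂(q−1)/(√α q))·Σ_j |j⟩|ν_{x_j}⟩|v_{xj}⟩` is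
orthogonal to every `|ψ_{y,α,ε̂}⟩`, is fixed by `Λ^{α,ε̂}`, `Π_x` and `U(𝒫,x,α,ε̂)`,
and has `‖φ_x‖² = 1 + (ε̂(q−1)²/(αq²))·w_−(𝒫,x)`. -/
theorem phi_fixed_vector (hq : 2 ≤ q) (hn : 1 ≤ n) (hm : 1 ≤ m) [FiniteDimensional ℂ 𝓗]
    (X : Finset (Fin n → Fin q)) (ρ σ : (Fin n → Fin q) → 𝓗)
    (hρ : ∀ x ∈ X, ‖ρ x‖ = 1) (hσ : ∀ x ∈ X, ‖σ x‖ = 1)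
    (u v : (Fin n → Fin q) → Fin n → EuclideanSpace ℂ (Fin m))
    (hP : IsCVS X ρ σ u v)
    (μ : Fin q → EuclideanSpace ℂ (Fin q)) (hμ : ∀ i, ‖μ i‖ = 1)
    (x : Fin n → Fin q) (hx : x ∈ X)
    (α εh : ℝ) (hα : 0 < α) (hε : 0 < εh)
    (ν : Fin q → EuclideanSpace ℂ (Fin q)) (hν : ∀ i, ‖ν i‖ = 1)
    (hμν : ∀ i j, (inner ℂ (μ i) (ν j) : ℂ) =
      ((q : ℂ) / (2 * ((q : ℂ) - 1))) * (if i = j then 0 else 1))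
    (φ : BigSpace 𝓗 q n m)
    (hφ : φ = tPlus ρ σ x +
      (((Real.sqrt εh * ((q : ℝ) - 1) / (Real.sqrt α * (q : ℝ)) : ℝ) : ℂ)) •
        mkBig 0 (mkPi fun j => tens (ν (x j)) (v x j))) :
    (∀ y ∈ X, (inner ℂ (psi ρ σ u μ α εh y) φ : ℂ) = 0) ∧
      LambdaCVS X ρ σ u μ α εh φ = φ ∧
      PiX μ x φ = φ ∧
      Ucvs X ρ σ u μ α εh x φ = φ ∧
      ‖φ‖ ^ 2 = 1 + (εh * ((q : ℝ) - 1) ^ 2 / (α * (q : ℝ) ^ 2)) * wSize v x := by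
  have hq0 : (q : ℝ) ≠ 0 := by positivity
  have hq2 : (2 : ℝ) ≤ (q : ℝ) := by exact_mod_cast hq
  have hq1 : (q : ℝ) - 1 ≠ 0 := by linarith
  have hsa : Real.sqrt α ≠ 0 := by positivity
  set s : ℝ := Real.sqrt (εh / α) with hs
  set c : ℝ := Real.sqrt εh * ((q : ℝ) - 1) / (Real.sqrt α * (q : ℝ)) with hc
  have hscR : s / 2 = c * ((q : ℝ) / (2 * ((q : ℝ) - 1))) := by
    rw [hs, hc, Real.sqrt_div hε.le]
    field_simp
  have hsc : ((s : ℝ) : ℂ) / 2 = ((c : ℝ) : ℂ) * ((q : ℂ) / (2 * ((q : ℂ) - 1))) := by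
    have h := congrArg (fun t : ℝ => (t : ℂ)) hscR
    push_cast at h
    exact h
  -- Part 1: orthogonality
  have hkey : ∀ y ∈ X, (inner ℂ (psi ρ σ u μ α εh y) φ : ℂ) = 0 := by
    intro y hy
    have hD := hP y hy x hx
    have hAB : (inner ℂ (mkBig (𝓗 := 𝓗) 0 (mkPi fun j => tens (μ (y j)) (u y j)))
        (mkBig 0 (mkPi fun j => tens (ν (x j)) (v x j))) : ℂ) =
        ((q : ℂ) / (2 * ((q : ℂ) - 1))) *
          ((inner ℂ (ρ y) (ρ x) : ℂ) - (inner ℂ (σ y) (σ x) : ℂ)) := by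
      rw [inner_mkBig00, hD]
      rw [Finset.sum_filter, Finset.mul_sum]
      refine Finset.sum_congr rfl fun j _ => ?_
      rw [inner_tens, hμν]
      by_cases h : y j = x j <;> simp [h]
    rw [hφ, psi, inner_sub_left, inner_add_right, inner_add_right,
      inner_smul_left, inner_smul_left, inner_smul_right, inner_smul_right]
    rw [inner_tMinus_tPlus]
    rw [show (inner ℂ (tMinus (m := m) ρ σ y)
        (mkBig (𝓗 := 𝓗) 0 (mkPi fun j => tens (ν (x j)) (v x j))) : ℂ) = 0 from
      inner_mkBig_zero₁ _ _]
    rw [show (inner ℂ (mkBig (𝓗 := 𝓗) 0 (mkPi fun j => tens (μ (y j)) (u y j)))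
        (tPlus ρ σ x) : ℂ) = 0 from inner_mkBig_zero₂ _ _]
    rw [hAB]
    simp only [Complex.conj_ofReal]
    linear_combination ((inner ℂ (ρ y) (ρ x) : ℂ) - (inner ℂ (σ y) (σ x) : ℂ)) * hsc
  -- Part 2: fixed by Λ
  have hmem : φ ∈ (Submodule.span ℂ
      ((fun x => psi ρ σ u μ α εh x) '' (X : Set (Fin n → Fin q))))ᗮ := by
    apply mem_span_orthogonal'
    rintro ψ ⟨y, hy, rfl⟩
    exact hkey y hy
  have hLam : LambdaCVS X ρ σ u μ α εh φ = φ := by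
    simp only [LambdaCVS, projL, LinearMap.comp_apply, ContinuousLinearMap.coe_coe,
      Submodule.coe_subtype]
    exact Submodule.starProjection_eq_self_iff.mpr hmem
  -- Part 3: fixed by Π
  have hPix : PiX μ x φ = φ := by
    apply PiX_fixed
    have h2 : (bigEquiv 𝓗 q n m φ).2 =
        ((c : ℝ) : ℂ) • mkPi (fun j => tens (ν (x j)) (v x j)) := by
      rw [hφ, map_add, map_smul]
      show (0 : PiLp 2 fun _ : Fin n => EuclideanSpace ℂ (Fin q × Fin m)) + _ = _
      rw [zero_add]
      rfl
    rw [h2, map_smul, sumProjMu_mkPi]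
    have h3 : (fun j => projMu (m := m) (μ (x j)) (tens (ν (x j)) (v x j))) =
        fun _ => 0 :=
      funext fun j => projMu_tens_zero _ _ _ (by rw [hμν]; simp)
    rw [h3]
    show ((c : ℝ) : ℂ) • mkPi (fun _ => (0 : EuclideanSpace ℂ (Fin q × Fin m))) = 0
    have : mkPi (n := n) (fun _ => (0 : EuclideanSpace ℂ (Fin q × Fin m))) = 0 := rfl
    rw [this, smul_zero]
  -- Part 4: fixed by U
  have hU : Ucvs X ρ σ u μ α εh x φ = φ := by
    have step1 : ((2 • LambdaCVS X ρ σ u μ α εh - LinearMap.id :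
        BigSpace 𝓗 q n m →ₗ[ℂ] BigSpace 𝓗 q n m)) φ = φ := by
      rw [LinearMap.sub_apply, LinearMap.smul_apply, hLam, LinearMap.id_apply, two_smul]; abel
    rw [Ucvs, LinearMap.comp_apply, step1, LinearMap.sub_apply, LinearMap.smul_apply, hPix,
      LinearMap.id_apply, two_smul]
    abel
  -- Part 5: norm
  have hρx : (inner ℂ (ρ x) (ρ x) : ℂ) = 1 := by
    rw [inner_self_eq_norm_sq_to_K, hρ x hx]; norm_num
  have hσx : (inner ℂ (σ x) (σ x) : ℂ) = 1 := by
    rw [inner_self_eq_norm_sq_to_K, hσ x hx]; norm_num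
  have hBB : (inner ℂ (mkBig (𝓗 := 𝓗) 0 (mkPi fun j => tens (ν (x j)) (v x j)))
      (mkBig 0 (mkPi fun j => tens (ν (x j)) (v x j))) : ℂ) = ((wSize v x : ℝ) : ℂ) := by
    rw [inner_mkBig00, wSize]
    push_cast
    refine Finset.sum_congr rfl fun j _ => ?_
    rw [inner_tens, inner_self_eq_norm_sq_to_K, hν, inner_self_eq_norm_sq_to_K]
    norm_num
  have hφφ : (inner ℂ φ φ : ℂ) = ((1 + c ^ 2 * wSize v x : ℝ) : ℂ) := by
    rw [hφ]
    simp only [inner_add_left, inner_add_right, inner_smul_left, inner_smul_right]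
    rw [inner_tPlus_tPlus, hρx, hσx]
    rw [show (inner ℂ (tPlus (m := m) ρ σ x)
        (mkBig (𝓗 := 𝓗) 0 (mkPi fun j => tens (ν (x j)) (v x j))) : ℂ) = 0 from
      inner_mkBig_zero₁ _ _]
    rw [show (inner ℂ (mkBig (𝓗 := 𝓗) 0 (mkPi fun j => tens (ν (x j)) (v x j)))
        (tPlus ρ σ x) : ℂ) = 0 from inner_mkBig_zero₂ _ _]
    rw [hBB, Complex.conj_ofReal]
    push_cast
    ring
  have hc2 : c ^ 2 = εh * ((q : ℝ) - 1) ^ 2 / (α * (q : ℝ) ^ 2) := by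
    rw [hc, div_pow, mul_pow, mul_pow, Real.sq_sqrt hε.le, Real.sq_sqrt hα.le]
  have hnorm : ‖φ‖ ^ 2 = 1 + (εh * ((q : ℝ) - 1) ^ 2 / (α * (q : ℝ) ^ 2)) * wSize v x := by
    rw [← inner_self_eq_norm_sq (𝕜 := ℂ), hφφ, ← hc2]
    exact Complex.ofReal_re _
  exact ⟨hkey, hLam, hPix, hU, hnorm⟩
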